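/- Let G be a group whose derived subgroup G′ = [G,G] has a complement in G, i.e. there is a subgroup B ≤ G with G = G′B and G′ ∩ B = 1. Then Δ(G) is isomorphic to Δ(G_ab), where G_ab = G/G′ is the abelianization of G. -/

import Mathlib

/- Nonabelian tensor square framework (Brown–Loday). -/

namespace NATensor

variable (G : Type*) [Group G]

/-- The relator set for the nonabelian tensor square of `G`:
`g g' ⊗ h = (ᵍg' ⊗ ᵍh)(g ⊗ h)` and `g ⊗ h h' = (g ⊗ h)(ʰg ⊗ ʰh')`. -/
def rels : Set (FreeGroup (G × G)) :=
  {r | (∃ g g' h : G,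
          r = FreeGroup.of (g * g', h) *
              (FreeGroup.of (g * g' * g⁻¹, g * h * g⁻¹) * FreeGroup.of (g, h))⁻¹) ∨
       (∃ g h h' : G,
          r = FreeGroup.of (g, h * h') *
              (FreeGroup.of (g, h) * FreeGroup.of (h * g * h⁻¹, h * h' * h⁻¹))⁻¹)}

/-- The nonabelian tensor square `G ⊗ G`. -/
abbrev TS := PresentedGroup (rels G)

variable {G}

/-- The generator `g ⊗ h` of the nonabelian tensor square. -/
def tmul (g h : G) : TS G := PresentedGroup.of (g, h)

lemma mk_rel_eq_one {r : FreeGroup (G × G)} (hr : r ∈ rels G) :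
    (PresentedGroup.mk (rels G) r : TS G) = 1 :=
  (QuotientGroup.eq_one_iff r).mpr (Subgroup.subset_normalClosure hr)

lemma tmul_rel₁ (g g' h : G) :
    tmul (g * g') h = tmul (g * g' * g⁻¹) (g * h * g⁻¹) * tmul g h := by
  have h1 := mk_rel_eq_one (G := G) (Or.inl ⟨g, g', h, rfl⟩)
  simp only [map_mul, map_inv, mul_inv_eq_one] at h1
  exact h1

lemma tmul_rel₂ (g h h' : G) :
    tmul g (h * h') = tmul g h * tmul (h * g * h⁻¹) (h * h' * h⁻¹) := by
  have h1 := mk_rel_eq_one (G := G) (Or.inr ⟨g, h, h', rfl⟩)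
  simp only [map_mul, map_inv, mul_inv_eq_one] at h1
  exact h1

variable (G)

/-- The homomorphism `κ : G ⊗ G → G`, `g ⊗ h ↦ [g,h] = g h g⁻¹ h⁻¹` (its image is `[G,G]`). -/
def kappa : TS G →* G :=
  PresentedGroup.toGroup (f := fun x : G × G => x.1 * x.2 * x.1⁻¹ * x.2⁻¹) (by
    rintro r (⟨g, g', h, rfl⟩ | ⟨g, h, h', rfl⟩) <;>
      simp only [map_mul, map_inv, FreeGroup.lift_apply_of] <;> group)

variable {G}

@[simp] lemma kappa_tmul (g h : G) : kappa G (tmul g h) = g * h * g⁻¹ * h⁻¹ :=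
  PresentedGroup.toGroup.of _

variable (G)

/-- `J(G) = ker κ ≅ π₃(SK(G,1))`. -/
def J : Subgroup (TS G) := (kappa G).ker

/-- `∇(G)`: the (normal) subgroup of `G ⊗ G` generated by the elements `x ⊗ x`. -/
def nabla : Subgroup (TS G) :=
  Subgroup.normalClosure {t | ∃ x : G, t = tmul x x}

/-- `Δ(G)`: the (normal) subgroup of `G ⊗ G` generated by the `(x ⊗ y)(y ⊗ x)`. -/
def delta : Subgroup (TS G) :=
  Subgroup.normalClosure {t | ∃ x y : G, t = tmul x y * tmul y x}

instance : (nabla G).Normal := Subgroup.normalClosure_normal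

instance : (delta G).Normal := Subgroup.normalClosure_normal

/-- The exterior square `G ∧ G = (G ⊗ G)/∇(G)`. -/
abbrev ES := TS G ⧸ nabla G

/-- The symmetric square `G ⊗̃ G = (G ⊗ G)/Δ(G)`. -/
abbrev SS := TS G ⧸ delta G

variable {G}

/-- The element `g ∧ h` of the exterior square. -/
def emul (g h : G) : ES G := QuotientGroup.mk' (nabla G) (tmul g h)

/-- The image of `g ⊗ h` in the symmetric square. -/
def smul (g h : G) : SS G := QuotientGroup.mk' (delta G) (tmul g h)

variable {H : Type*} [Group H]

/-- The induced homomorphism `G ⊗ G → H ⊗ H` of a homomorphism `f : G → H`. -/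
def tmap (f : G →* H) : TS G →* TS H :=
  PresentedGroup.toGroup (f := fun x : G × G => tmul (f x.1) (f x.2)) (by
    rintro r (⟨g, g', h, rfl⟩ | ⟨g, h, h', rfl⟩) <;>
      simp only [map_mul, map_inv, FreeGroup.lift_apply_of, mul_inv_eq_one]
    · rw [tmul_rel₁]
    · rw [tmul_rel₂])

@[simp] lemma tmap_tmul (f : G →* H) (g h : G) :
    tmap f (tmul g h) = tmul (f g) (f h) :=
  PresentedGroup.toGroup.of _

lemma nabla_le_comap_nabla (f : G →* H) :
    nabla G ≤ MonoidHom.ker ((QuotientGroup.mk' (nabla H)).comp (tmap f)) := by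
  refine Subgroup.normalClosure_le_normal ?_
  rintro _ ⟨y, rfl⟩
  simp only [SetLike.mem_coe, MonoidHom.mem_ker, MonoidHom.comp_apply, tmap_tmul,
    QuotientGroup.mk'_apply, QuotientGroup.eq_one_iff]
  exact Subgroup.subset_normalClosure ⟨f y, rfl⟩

lemma delta_le_comap_delta (f : G →* H) :
    delta G ≤ MonoidHom.ker ((QuotientGroup.mk' (delta H)).comp (tmap f)) := by
  refine Subgroup.normalClosure_le_normal ?_
  rintro _ ⟨x, y, rfl⟩
  simp only [SetLike.mem_coe, MonoidHom.mem_ker, MonoidHom.comp_apply, map_mul, tmap_tmul,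
    QuotientGroup.mk'_apply, ← QuotientGroup.mk_mul, QuotientGroup.eq_one_iff]
  exact Subgroup.subset_normalClosure ⟨f x, f y, rfl⟩

/-- The induced homomorphism `G ∧ G → H ∧ H` of a homomorphism `f : G → H`. -/
def emap (f : G →* H) : ES G →* ES H :=
  QuotientGroup.lift (nabla G) ((QuotientGroup.mk' (nabla H)).comp (tmap f))
    (fun x hx => MonoidHom.mem_ker.mp (nabla_le_comap_nabla f hx))

@[simp] lemma emap_emul (f : G →* H) (g h : G) :
    emap f (emul g h) = emul (f g) (f h) := by
  simp only [emap, emul, QuotientGroup.mk'_apply]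
  exact (QuotientGroup.lift_mk _ _ _).trans (by simp)

/-- The induced homomorphism `G ⊗̃ G → H ⊗̃ H` of a homomorphism `f : G → H`. -/
def smap (f : G →* H) : SS G →* SS H :=
  QuotientGroup.lift (delta G) ((QuotientGroup.mk' (delta H)).comp (tmap f))
    (fun x hx => MonoidHom.mem_ker.mp (delta_le_comap_delta f hx))

variable (G)

lemma nabla_le_ker_kappa : nabla G ≤ (kappa G).ker := by
  refine Subgroup.normalClosure_le_normal ?_
  rintro _ ⟨x, rfl⟩
  simp only [SetLike.mem_coe, MonoidHom.mem_ker, kappa_tmul]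
  group

/-- The homomorphism `κ' : G ∧ G → G`, `g ∧ h ↦ [g,h]` (its image is `[G,G]`). -/
def kappa' : ES G →* G :=
  QuotientGroup.lift (nabla G) (kappa G)
    (fun x hx => MonoidHom.mem_ker.mp (nabla_le_ker_kappa G hx))

/-- The Schur multiplier `M(G) = ker κ' ≅ H₂(G)`. -/
def M : Subgroup (ES G) := (kappa' G).ker

/-- `J̃(G) = J(G)/Δ(G) ≅ π₂ˢ(K(G,1))`, realized as the image of `J(G)` in `G ⊗̃ G`. -/
def Jt : Subgroup (SS G) := Subgroup.map (QuotientGroup.mk' (delta G)) (J G)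

/-- `∇(G)/Δ(G)`, realized as the image of `∇(G)` in `G ⊗̃ G`. -/
def nablaBar : Subgroup (SS G) := Subgroup.map (QuotientGroup.mk' (delta G)) (nabla G)

end NATensor

section Dev

namespace NATensor

variable {G : Type*} [Group G]

/-! ### Infrastructure -/

/-- Conjugation as a monoid hom. -/
def conjHom (g : G) : G →* G where
  toFun x := g * x * g⁻¹
  map_one' := by simp
  map_mul' x y := by group

@[simp] lemma conjHom_apply (g x : G) : conjHom g x = g * x * g⁻¹ := rfl

/-- The action of `G` on `G ⊗ G`. -/
def act (g : G) : TS G →* TS G := tmap (conjHom g)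

@[simp] lemma act_tmul (g x y : G) :
    act g (tmul x y) = tmul (g * x * g⁻¹) (g * y * g⁻¹) := by
  simp [act, tmap_tmul]

lemma ts_hom_ext {H : Type*} [Group H] {φ ψ : TS G →* H}
    (h : ∀ x y, φ (tmul x y) = ψ (tmul x y)) : φ = ψ :=
  PresentedGroup.ext fun ⟨x, y⟩ => h x y

@[simp] lemma act_one_apply (t : TS G) : act (1 : G) t = t := by
  have : act (1 : G) = MonoidHom.id (TS G) :=
    ts_hom_ext fun x y => by simp
  rw [this]; rfl

lemma act_act (a b : G) (t : TS G) : act a (act b t) = act (a * b) t := by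
  have : (act a).comp (act b) = act (a * b) := by
    refine ts_hom_ext fun x y => ?_
    simp only [MonoidHom.comp_apply, act_tmul]
    congr 1 <;> group
  exact DFunLike.congr_fun this t

lemma tmC {a a' b b' : G} (ha : a = a') (hb : b = b') : tmul a b = tmul a' b' := by
  rw [ha, hb]

@[simp] lemma tmul_one_left (h : G) : tmul (1 : G) h = 1 := by
  have h1 := tmul_rel₁ (1 : G) 1 h
  simp only [mul_one, one_mul, inv_one] at h1
  exact mul_left_cancel (a := tmul (1:G) h) (by rw [mul_one, ← h1])

@[simp] lemma tmul_one_right (g : G) : tmul g (1 : G) = 1 := by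
  have h1 := tmul_rel₂ g 1 1
  simp only [mul_one, one_mul, inv_one] at h1
  exact mul_left_cancel (a := tmul g (1:G)) (by rw [mul_one, ← h1])

/-- Inversion formula: `(g ⊗ x)⁻¹ = (g⁻¹ ⊗ ᵍx)`. -/
lemma tmul_inv (g x : G) : (tmul g x)⁻¹ = tmul g⁻¹ (g * x * g⁻¹) := by
  have h1 := tmul_rel₁ g g⁻¹ x
  rw [mul_inv_cancel, tmul_one_left] at h1
  rw [tmC (show (1:G) * g⁻¹ = g⁻¹ by group) rfl] at h1
  exact (eq_inv_of_mul_eq_one_left h1.symm).symm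

/-! ### The fundamental commutation identity -/

/-- Comparing the two expansions of `(g g') ⊗ (h h')`. -/
lemma craw (g h g' h' : G) :
    tmul (g * h * g' * (g * h)⁻¹) (g * h * h' * (g * h)⁻¹) * tmul g h =
      tmul g h * tmul (h * g * g' * (h * g)⁻¹) (h * g * h' * (h * g)⁻¹) := by
  set T1 := tmul (g * g' * g⁻¹) (g * h * g⁻¹) with hT1
  set T2 := tmul (g * h * g' * (g * h)⁻¹) (g * h * h' * (g * h)⁻¹) with hT2
  set T3 := tmul g h with hT3
  set T4 := tmul (h * g * h⁻¹) (h * h' * h⁻¹) with hT4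
  set T2' := tmul (h * g * g' * (h * g)⁻¹) (h * g * h' * (h * g)⁻¹) with hT2'
  have A1 := tmul_rel₁ g g' (h * h')
  have A2 := tmul_rel₂ (g * g' * g⁻¹) (g * h * g⁻¹) (g * h' * g⁻¹)
  have A3 := tmul_rel₂ g h h'
  rw [tmC rfl (show g * (h * h') * g⁻¹ = (g * h * g⁻¹) * (g * h' * g⁻¹) by group)] at A1
  rw [tmC (show (g*h*g⁻¹) * (g*g'*g⁻¹) * (g*h*g⁻¹)⁻¹ = g * h * g' * (g*h)⁻¹ by group)
      (show (g*h*g⁻¹) * (g*h'*g⁻¹) * (g*h*g⁻¹)⁻¹ = g * h * h' * (g*h)⁻¹ by group)] at A2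
  have EqA : tmul (g * g') (h * h') = T1 * T2 * (T3 * T4) := by
    rw [A1, A2, A3]
  have B1 := tmul_rel₂ (g * g') h h'
  have B2 := tmul_rel₁ g g' h
  have B3 := tmul_rel₁ (h * g * h⁻¹) (h * g' * h⁻¹) (h * h' * h⁻¹)
  rw [tmC (show h * (g * g') * h⁻¹ = (h * g * h⁻¹) * (h * g' * h⁻¹) by group) rfl] at B1
  rw [tmC (show (h*g*h⁻¹) * (h*g'*h⁻¹) * (h*g*h⁻¹)⁻¹ = h * g * g' * (h*g)⁻¹ by group)
      (show (h*g*h⁻¹) * (h*h'*h⁻¹) * (h*g*h⁻¹)⁻¹ = h * g * h' * (h*g)⁻¹ by group)] at B3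
  have EqB : tmul (g * g') (h * h') = T1 * T3 * (T2' * T4) := by
    rw [B1, B2, B3]
  have E : T1 * (T2 * (T3 * T4)) = T1 * (T3 * (T2' * T4)) := by
    rw [← mul_assoc, ← EqA, EqB, mul_assoc]
  have E2 : T2 * (T3 * T4) = T3 * (T2' * T4) := mul_left_cancel E
  have E3 : T2 * T3 * T4 = T3 * T2' * T4 := by
    rw [mul_assoc, mul_assoc]; exact E2
  exact mul_right_cancel E3

/-- Conjugation by a generator is the action of its commutator. -/
lemma tmul_conj_eq_act (g h : G) (s : TS G) :
    tmul g h * s * (tmul g h)⁻¹ = act (g * h * g⁻¹ * h⁻¹) s := by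
  set c := g * h * g⁻¹ * h⁻¹ with hc
  let K : Subgroup (TS G) :=
    { carrier := {s | tmul g h * s * (tmul g h)⁻¹ = act c s}
      one_mem' := by simp
      mul_mem' := by
        intro a b ha hb
        simp only [Set.mem_setOf_eq] at ha hb ⊢
        rw [map_mul, ← ha, ← hb]; group
      inv_mem' := by
        intro a ha
        simp only [Set.mem_setOf_eq] at ha ⊢
        rw [map_inv, ← ha]; group }
  have : s ∈ K := by
    refine PresentedGroup.generated_by _ K ?_ s
    rintro ⟨x, y⟩
    show tmul g h * tmul x y * (tmul g h)⁻¹ = act c (tmul x y)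
    have h1 := craw g h ((h*g)⁻¹ * x * (h*g)) ((h*g)⁻¹ * y * (h*g))
    rw [tmC (show h * g * ((h*g)⁻¹ * x * (h*g)) * (h*g)⁻¹ = x by group)
        (show h * g * ((h*g)⁻¹ * y * (h*g)) * (h*g)⁻¹ = y by group)] at h1
    rw [tmC (show g * h * ((h*g)⁻¹ * x * (h*g)) * (g*h)⁻¹ = c * x * c⁻¹ by rw [hc]; group)
        (show g * h * ((h*g)⁻¹ * y * (h*g)) * (g*h)⁻¹ = c * y * c⁻¹ by rw [hc]; group)] at h1
    rw [act_tmul, ← h1, mul_inv_cancel_right]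
  exact this

/-- Peiffer identity: conjugation in `G ⊗ G` is the action of the `κ`-image. -/
lemma conj_eq_act (t s : TS G) : t * s * t⁻¹ = act (kappa G t) s := by
  let K : Subgroup (TS G) :=
    { carrier := {t | ∀ s, t * s * t⁻¹ = act (kappa G t) s}
      one_mem' := by intro s; simp
      mul_mem' := by
        intro a b ha hb s
        simp only [Set.mem_setOf_eq] at ha hb
        rw [map_mul, ← act_act, ← ha, ← hb]; group
      inv_mem' := by
        intro a ha s
        simp only [Set.mem_setOf_eq] at ha ⊢
        have h1 : s = act (kappa G a) (a⁻¹ * s * a) := by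
          rw [← ha (a⁻¹ * s * a)]; group
        have h2 : act (kappa G a)⁻¹ s = a⁻¹ * s * a := by
          conv_lhs => rw [h1]
          rw [act_act, inv_mul_cancel, act_one_apply]
        rw [map_inv, h2]; group
    }
  have : t ∈ K := by
    refine PresentedGroup.generated_by _ K ?_ t
    rintro ⟨x, y⟩ s
    show tmul x y * s * (tmul x y)⁻¹ = act (kappa G (tmul x y)) s
    rw [kappa_tmul]
    exact tmul_conj_eq_act x y s
  exact this s

/-- Elements of `J(G) = ker κ` are central. -/
lemma commute_of_kappa_one {s : TS G} (hs : kappa G s = 1) (t : TS G) :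
    s * t = t * s := by
  have := conj_eq_act s t
  rw [hs, act_one_apply] at this
  conv_rhs => rw [← this]
  rw [inv_mul_cancel_right]

end NATensor

end Dev


section Dev2

namespace NATensor

variable {G : Type*} [Group G]

/-- `dd x y = (x ⊗ y)(y ⊗ x)`. -/
def dd (x y : G) : TS G := tmul x y * tmul y x

/-- `dl x = x ⊗ x`. -/
def dl (x : G) : TS G := tmul x x

lemma dlC {a a' : G} (h : a = a') : dl a = dl a' := by rw [h]

lemma ddC {a a' b b' : G} (ha : a = a') (hb : b = b') : dd a b = dd a' b' := by rw [ha, hb]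

@[simp] lemma kappa_dd (x y : G) : kappa G (dd x y) = 1 := by
  simp only [dd, map_mul, kappa_tmul]; group

@[simp] lemma kappa_dl (x : G) : kappa G (dl x) = 1 := by
  simp only [dl, kappa_tmul]; group

lemma dd_commute (x y : G) (t : TS G) : dd x y * t = t * dd x y :=
  commute_of_kappa_one (kappa_dd x y) t

lemma dl_commute (x : G) (t : TS G) : dl x * t = t * dl x :=
  commute_of_kappa_one (kappa_dl x) t

/-- The key identity: `x ⊗ x` is invariant under conjugation of `x`. -/
lemma dl_conj (g x : G) : dl (g * x * g⁻¹) = dl x := by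
  -- step A : ⟨ᵍx, ᵍx⟩ = ⟨g x, x⟩ ⟨g⁻¹, ᵍx⟩
  have hA := tmul_rel₁ g⁻¹ (g * (g * x * g⁻¹)) (g * x * g⁻¹)
  rw [tmC (show g⁻¹ * (g * (g * x * g⁻¹)) = g * x * g⁻¹ by group) rfl] at hA
  rw [tmC (show g⁻¹ * (g * (g * x * g⁻¹)) * g⁻¹⁻¹ = g * x by group)
      (show g⁻¹ * (g * x * g⁻¹) * g⁻¹⁻¹ = x by group)] at hA
  -- step B : ⟨g x, x⟩ = ⟨g, x⟩ ⟨x, x⟩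
  have hB := tmul_rel₁ x (x⁻¹ * g * x) x
  rw [tmC (show x * (x⁻¹ * g * x) = g * x by group) rfl] at hB
  rw [tmC (show x * (x⁻¹ * g * x) * x⁻¹ = g by group)
      (show x * x * x⁻¹ = x by group)] at hB
  -- step C : ⟨g⁻¹, ᵍx⟩ = ⟨g, x⟩⁻¹
  have hC := tmul_inv g x
  show tmul (g * x * g⁻¹) (g * x * g⁻¹) = dl x
  rw [hA, hB, ← hC]
  show tmul g x * dl x * (tmul g x)⁻¹ = dl x
  rw [mul_assoc, dl_commute x (tmul g x)⁻¹, ← mul_assoc, mul_inv_cancel, one_mul]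

lemma act_dl (g x : G) : act g (dl x) = dl x := by
  show act g (tmul x x) = dl x
  rw [act_tmul]; exact dl_conj g x

/-- Central shuffle helper. -/
lemma central_shuffle {A B P Q : TS G} (hA : ∀ t, A * t = t * A) (hB : ∀ t, B * t = t * B) :
    P * A * (B * Q) = A * B * (P * Q) := by
  rw [← hA P, mul_assoc, ← mul_assoc P B Q, ← hB P, mul_assoc B P Q, ← mul_assoc A B (P * Q)]

/-- Expansion of the diagonal of a product. -/
lemma dl_mul (x y : G) : dl (x * y) = dl y * dl x * dd x y := by
  have key : ∀ g h : G, dl (g * h) = dl g * dl h * dd (g * h * g⁻¹) g := by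
    intro g h
    have h1 := tmul_rel₂ (g * h) g h
    have h2 := tmul_rel₁ g h g
    rw [tmC rfl (show g * g * g⁻¹ = g by group)] at h2
    have h3 := tmul_rel₁ g (g * h * g⁻¹) (g * h * g⁻¹)
    rw [tmC (show g * (g * h * g⁻¹) = g * (g * h) * g⁻¹ by group) rfl] at h3
    have h4 : tmul (g * (g * h * g⁻¹) * g⁻¹) (g * (g * h * g⁻¹) * g⁻¹) = dl h := by
      rw [show tmul (g * (g * h * g⁻¹) * g⁻¹) (g * (g * h * g⁻¹) * g⁻¹)
          = dl (g * (g * h * g⁻¹) * g⁻¹) from rfl, dl_conj, dl_conj]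
    rw [h4] at h3
    have h6 : dl (g * h) = tmul (g * h * g⁻¹) g * dl g * (dl h * tmul g (g * h * g⁻¹)) := by
      show tmul (g * h) (g * h) = _
      rw [h1, h2, h3]; rfl
    rw [h6, central_shuffle (dl_commute g) (dl_commute h)]
    rfl
  have h0 := key y (y⁻¹ * x * y)
  rw [dlC (show y * (y⁻¹ * x * y) = x * y by group)] at h0
  rw [dlC (show y⁻¹ * x * y = y⁻¹ * x * y⁻¹⁻¹ by group), dl_conj] at h0
  rw [ddC (show y * (y⁻¹ * x * y) * y⁻¹ = x by group) rfl] at h0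
  exact h0

lemma dd_conj (w x y : G) : dd (w * x * w⁻¹) (w * y * w⁻¹) = dd x y := by
  have h1 := dl_mul (w * x * w⁻¹) (w * y * w⁻¹)
  rw [dlC (show (w * x * w⁻¹) * (w * y * w⁻¹) = w * (x * y) * w⁻¹ by group), dl_conj,
      dl_conj, dl_conj] at h1
  have h2 := dl_mul x y
  rw [h2] at h1
  exact (mul_left_cancel h1).symm

lemma dd_mul_left (x x' y : G) : dd (x * x') y = dd x' y * dd x y := by
  have h1 := tmul_rel₁ x x' y
  have h2 := tmul_rel₂ y x x'
  set P := tmul (x * x' * x⁻¹) (x * y * x⁻¹) with hP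
  set Q := tmul (x * y * x⁻¹) (x * x' * x⁻¹) with hQ
  have e1 : P * tmul x y * (tmul y x * Q) = P * (dd x y * Q) := by
    rw [dd]; group
  have e2 : P * (dd x y * Q) = P * Q * dd x y := by
    rw [dd_commute x y Q, ← mul_assoc]
  have e3 : P * Q = dd x' y := dd_conj x x' y
  show tmul (x * x') y * tmul y (x * x') = _
  rw [h1, h2, e1, e2, e3]

@[simp] lemma dd_one_left (y : G) : dd (1 : G) y = 1 := by
  show tmul 1 y * tmul y 1 = 1
  rw [tmul_one_left, tmul_one_right, one_mul]

lemma dd_inv_left (x y : G) : dd x⁻¹ y = (dd x y)⁻¹ := by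
  have h := dd_mul_left x x⁻¹ y
  rw [mul_inv_cancel, dd_one_left] at h
  exact (eq_inv_of_mul_eq_one_left h.symm)

open scoped commutatorElement in
lemma dd_commutatorElement (a b y : G) : dd ⁅a, b⁆ y = 1 := by
  rw [commutatorElement_def]
  rw [show a * b * a⁻¹ * b⁻¹ = a * b * a⁻¹ * b⁻¹ from rfl]
  rw [dd_mul_left (a * b * a⁻¹) b⁻¹ y, dd_mul_left (a * b) a⁻¹ y, dd_mul_left a b y,
      dd_inv_left a y, dd_inv_left b y]
  -- (dd b y)⁻¹ * ((dd a y)⁻¹ * (dd b y * dd a y)) = 1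
  rw [← dd_commute a y (dd b y)]
  group

lemma dd_eq_one_of_mem_commutator {c : G} (hc : c ∈ commutator G) (y : G) :
    dd c y = 1 := by
  let S : Subgroup G :=
    { carrier := {c | ∀ y, dd c y = 1}
      one_mem' := fun y => dd_one_left y
      mul_mem' := by
        intro a b ha hb y
        rw [dd_mul_left, ha y, hb y, one_mul]
      inv_mem' := by
        intro a ha y
        rw [dd_inv_left, ha y, inv_one] }
  have hle : commutator G ≤ S := by
    rw [commutator_eq_closure, Subgroup.closure_le]
    rintro c ⟨p, q, rfl⟩
    intro y
    exact dd_commutatorElement p q y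
  exact hle hc y

lemma dd_symm (x y : G) : dd x y = dd y x := by
  have h : dd x y * tmul x y = tmul x y * dd x y := dd_commute x y (tmul x y)
  have h2 : tmul x y * (tmul y x * tmul x y) = tmul x y * (tmul x y * tmul y x) := by
    rw [← mul_assoc]; exact h
  exact (mul_left_cancel h2).symm

/-- The fundamental invariance: `dd` only depends on the images in the abelianization. -/
lemma dd_eq_of_abel {x x' y y' : G}
    (hx : Abelianization.of x = Abelianization.of x')
    (hy : Abelianization.of y = Abelianization.of y') :
    dd x y = dd x' y' := by
  have keyc : ∀ {u u' : G}, Abelianization.of u = Abelianization.of u' →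
      u' * u⁻¹ ∈ commutator G := by
    intro u u' h
    have h1 : Abelianization.of (u' * u⁻¹) = 1 := by
      rw [map_mul, map_inv, ← h, mul_inv_cancel]
    exact (QuotientGroup.eq_one_iff _).mp h1
  have step : ∀ (u u' v : G), Abelianization.of u = Abelianization.of u' →
      dd u' v = dd u v := by
    intro u u' v h
    have hc := keyc h
    have h2 : dd u' v = dd (u' * u⁻¹ * u) v := ddC (by group) rfl
    rw [h2, dd_mul_left, dd_eq_one_of_mem_commutator hc, mul_one]
  calc dd x y = dd x' y := (step x x' y hx).symm
    _ = dd y x' := dd_symm x' y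
    _ = dd y' x' := (step y y' x' hy).symm
    _ = dd x' y' := dd_symm y' x'

end NATensor

end Dev2


section Dev3

namespace NATensor

variable {G : Type*} [Group G]

lemma tmap_comp_apply {H K : Type*} [Group H] [Group K] (f : H →* K) (e : G →* H)
    (t : TS G) : tmap f (tmap e t) = tmap (f.comp e) t := by
  have : (tmap f).comp (tmap e) = tmap (f.comp e) :=
    ts_hom_ext fun x y => by simp [tmap_tmul]
  exact DFunLike.congr_fun this t

lemma tmap_id_apply (t : TS G) : tmap (MonoidHom.id G) t = t := by
  have : tmap (MonoidHom.id G) = MonoidHom.id (TS G) :=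
    ts_hom_ext fun x y => by simp [tmap_tmul]
  rw [this]; rfl

lemma tmap_dd {H : Type*} [Group H] (f : G →* H) (x y : G) :
    tmap f (dd x y) = dd (f x) (f y) := by
  simp [dd, tmap_tmul]

/-- Since the generators of `Δ(G)` are central, the normal closure is just the closure. -/
lemma delta_eq_closure :
    delta G = Subgroup.closure {t : TS G | ∃ x y : G, t = tmul x y * tmul y x} := by
  have hnormal : (Subgroup.closure {t : TS G | ∃ x y : G, t = tmul x y * tmul y x}).Normal := by
    constructor
    intro n hn g
    induction hn using Subgroup.closure_induction with
    | mem t ht =>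
      obtain ⟨x, y, rfl⟩ := ht
      show g * dd x y * g⁻¹ ∈ _
      have e : g * dd x y * g⁻¹ = dd x y := by
        rw [mul_assoc, dd_commute x y g⁻¹, ← mul_assoc, mul_inv_cancel, one_mul]
      rw [e]
      exact Subgroup.subset_closure ⟨x, y, rfl⟩
    | one => simpa using Subgroup.one_mem _
    | mul a b _ _ ha hb =>
      have : g * (a * b) * g⁻¹ = (g * a * g⁻¹) * (g * b * g⁻¹) := by group
      rw [this]; exact Subgroup.mul_mem _ ha hb
    | inv a _ ha =>
      have : g * a⁻¹ * g⁻¹ = (g * a * g⁻¹)⁻¹ := by group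
      rw [this]; exact Subgroup.inv_mem _ ha
  apply le_antisymm
  · exact Subgroup.normalClosure_le_normal Subgroup.subset_closure
  · exact (Subgroup.closure_le _).mpr Subgroup.subset_normalClosure

end NATensor

end Dev3


open scoped Pointwise

open NATensor in
/-- if the derived subgroup `[G,G]` has a complement `B` in `G`
(`G = [G,G]B` and `[G,G] ∩ B = 1`), then `Δ(G) ≅ Δ(G_ab)`. -/
theorem delta_iso_delta_abelianization (G : Type*) [Group G]
    (B : Subgroup G) (hB1 : commutator G ⊔ B = ⊤) (hB2 : commutator G ⊓ B = ⊥) :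
    Nonempty (↥(delta G) ≃* ↥(delta (Abelianization G))) := by
  classical
  set A := Abelianization G with hA
  let π : G →* A := Abelianization.of
  -- the restriction of π to B is an isomorphism
  let f : B →* A := π.comp B.subtype
  have finj : Function.Injective f := by
    rw [← MonoidHom.ker_eq_bot_iff]
    rw [eq_bot_iff]
    intro b hb
    have h1 : (b : G) ∈ commutator G := by
      have : π (b : G) = 1 := hb
      exact (QuotientGroup.eq_one_iff _).mp this
    have h2 : (b : G) ∈ commutator G ⊓ B := ⟨h1, b.2⟩
    rw [hB2] at h2
    have : (b : G) = 1 := h2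
    exact Subgroup.mem_bot.mpr (Subtype.ext this)
  have fsurj : Function.Surjective f := by
    intro a
    obtain ⟨g, rfl⟩ : ∃ g, π g = a := QuotientGroup.mk_surjective a
    have hg : g ∈ B ⊔ commutator G := by
      rw [sup_comm, hB1]; trivial
    have hg2 : g ∈ (B : Set G) * (commutator G : Set G) := by
      rw [← Subgroup.mul_normal B (commutator G)]
      exact hg
    obtain ⟨b, hb, c, hc, rfl⟩ := hg2
    refine ⟨⟨b, hb⟩, ?_⟩
    have hc1 : π c = 1 := (QuotientGroup.eq_one_iff _).mpr hc
    show π b = π (b * c)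
    rw [map_mul, hc1, mul_one]
  let e : B ≃* A := MulEquiv.ofBijective f ⟨finj, fsurj⟩
  let σ : A →* G := B.subtype.comp e.symm.toMonoidHom
  have hπσ : ∀ a : A, π (σ a) = a := by
    intro a
    show π ((e.symm a : B) : G) = a
    have : f (e.symm a) = a := e.apply_symm_apply a
    exact this
  have hcompid : π.comp σ = MonoidHom.id A := MonoidHom.ext hπσ
  -- the two maps on tensor squares
  let P : TS G →* TS A := tmap π
  let S : TS A →* TS G := tmap σ
  have keyPS : ∀ u : TS A, P (S u) = u := by
    intro u
    show tmap π (tmap σ u) = u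
    rw [tmap_comp_apply, hcompid, tmap_id_apply]
  have keySP : ∀ t ∈ delta G, S (P t) = t := by
    intro t ht
    rw [delta_eq_closure] at ht
    induction ht using Subgroup.closure_induction with
    | mem t ht =>
      obtain ⟨x, y, rfl⟩ := ht
      show S (P (dd x y)) = dd x y
      have h1 : P (dd x y) = dd (π x) (π y) := tmap_dd π x y
      have h2 : S (dd (π x) (π y)) = dd (σ (π x)) (σ (π y)) := tmap_dd σ _ _
      rw [h1, h2]
      refine dd_eq_of_abel ?_ ?_
      · exact (hπσ (π x)).symm ▸ rfl
      · exact (hπσ (π y)).symm ▸ rfl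
    | one => simp
    | mul a b _ _ ha hb => rw [map_mul, map_mul, ha, hb]
    | inv a _ ha => rw [map_inv, map_inv, ha]
  -- P maps delta G into delta A, S maps delta A into delta G
  have hPmem : ∀ t ∈ delta G, P t ∈ delta A := by
    intro t ht
    rw [delta_eq_closure] at ht
    induction ht using Subgroup.closure_induction with
    | mem t ht =>
      obtain ⟨x, y, rfl⟩ := ht
      show P (dd x y) ∈ delta A
      rw [tmap_dd]
      exact Subgroup.subset_normalClosure ⟨π x, π y, rfl⟩
    | one => simp [Subgroup.one_mem]
    | mul a b _ _ ha hb => rw [map_mul]; exact Subgroup.mul_mem _ ha hb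
    | inv a _ ha => rw [map_inv]; exact Subgroup.inv_mem _ ha
  have hSmem : ∀ u ∈ delta A, S u ∈ delta G := by
    intro u hu
    rw [delta_eq_closure] at hu
    induction hu using Subgroup.closure_induction with
    | mem u hu =>
      obtain ⟨x, y, rfl⟩ := hu
      show S (dd x y) ∈ delta G
      rw [tmap_dd]
      exact Subgroup.subset_normalClosure ⟨σ x, σ y, rfl⟩
    | one => simp [Subgroup.one_mem]
    | mul a b _ _ ha hb => rw [map_mul]; exact Subgroup.mul_mem _ ha hb
    | inv a _ ha => rw [map_inv]; exact Subgroup.inv_mem _ ha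
  let Φ : delta G →* delta A :=
    (P.domRestrict (delta G)).codRestrict (delta A) (fun x => hPmem x.1 x.2)
  let Ψ : delta A →* delta G :=
    (S.domRestrict (delta A)).codRestrict (delta G) (fun x => hSmem x.1 x.2)
  have h₁ : Ψ.comp Φ = MonoidHom.id (delta G) := by
    ext t
    exact keySP t.1 t.2
  have h₂ : Φ.comp Ψ = MonoidHom.id (delta A) := by
    ext u
    exact keyPS u.1
  exact ⟨MonoidHom.toMulEquiv Φ Ψ h₁ h₂⟩
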